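/- For all integers s and t, the commutator g^s h^t g^{−s} h^{−t} equals the 2×2 real matrix with rows (1, t·((1+√2)^s − 1)) and (0, 1). -/

import Mathlib

private lemma gpow_aux (g : (Matrix (Fin 2) (Fin 2) ℝ)ˣ) {a : ℝ} (ha : a ≠ 0)
    (hg : (g : Matrix (Fin 2) (Fin 2) ℝ) = !![a, 0; 0, 1]) :
    ∀ s : ℤ, ((g ^ s : (Matrix (Fin 2) (Fin 2) ℝ)ˣ) : Matrix (Fin 2) (Fin 2) ℝ)
      = !![a ^ s, 0; 0, 1] := by
  have hinv : ((g⁻¹ : (Matrix (Fin 2) (Fin 2) ℝ)ˣ) : Matrix (Fin 2) (Fin 2) ℝ)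
      = !![a⁻¹, 0; 0, 1] := by
    have h1 : (!![a⁻¹, 0; 0, 1] : Matrix (Fin 2) (Fin 2) ℝ) * g = 1 := by
      rw [hg, Matrix.mul_fin_two]
      simp [inv_mul_cancel₀ ha, Matrix.one_fin_two]
    calc ((g⁻¹ : (Matrix (Fin 2) (Fin 2) ℝ)ˣ) : Matrix (Fin 2) (Fin 2) ℝ)
        = 1 * ((g⁻¹ : (Matrix (Fin 2) (Fin 2) ℝ)ˣ) : Matrix (Fin 2) (Fin 2) ℝ) := by rw [one_mul]
      _ = !![a⁻¹, 0; 0, 1] * ((g : Matrix (Fin 2) (Fin 2) ℝ) *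
            ((g⁻¹ : (Matrix (Fin 2) (Fin 2) ℝ)ˣ) : Matrix (Fin 2) (Fin 2) ℝ)) := by
          rw [← mul_assoc, h1]
      _ = !![a⁻¹, 0; 0, 1] := by rw [← Units.val_mul, mul_inv_cancel]; simp
  intro s
  induction s using Int.induction_on with
  | zero => simp [Matrix.one_fin_two]
  | succ n ih =>
      rw [zpow_add_one, Units.val_mul, ih, hg, Matrix.mul_fin_two, zpow_add_one₀ ha]
      norm_num
  | pred n ih =>
      rw [zpow_sub_one, Units.val_mul, ih, hinv, Matrix.mul_fin_two, zpow_sub_one₀ ha]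
      norm_num [div_eq_mul_inv]

private lemma hpow_aux (h : (Matrix (Fin 2) (Fin 2) ℝ)ˣ)
    (hh : (h : Matrix (Fin 2) (Fin 2) ℝ) = !![1, 1; 0, 1]) :
    ∀ t : ℤ, ((h ^ t : (Matrix (Fin 2) (Fin 2) ℝ)ˣ) : Matrix (Fin 2) (Fin 2) ℝ)
      = !![1, (t : ℝ); 0, 1] := by
  have hinv : ((h⁻¹ : (Matrix (Fin 2) (Fin 2) ℝ)ˣ) : Matrix (Fin 2) (Fin 2) ℝ)
      = !![1, -1; 0, 1] := by
    have h1 : (!![(1:ℝ), -1; 0, 1] : Matrix (Fin 2) (Fin 2) ℝ) * h = 1 := by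
      rw [hh, Matrix.mul_fin_two, Matrix.one_fin_two]
      norm_num
    calc ((h⁻¹ : (Matrix (Fin 2) (Fin 2) ℝ)ˣ) : Matrix (Fin 2) (Fin 2) ℝ)
        = 1 * ((h⁻¹ : (Matrix (Fin 2) (Fin 2) ℝ)ˣ) : Matrix (Fin 2) (Fin 2) ℝ) := by rw [one_mul]
      _ = !![1, -1; 0, 1] * ((h : Matrix (Fin 2) (Fin 2) ℝ) *
            ((h⁻¹ : (Matrix (Fin 2) (Fin 2) ℝ)ˣ) : Matrix (Fin 2) (Fin 2) ℝ)) := by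
          rw [← mul_assoc, h1]
      _ = !![1, -1; 0, 1] := by rw [← Units.val_mul, mul_inv_cancel]; simp
  intro t
  induction t using Int.induction_on with
  | zero => simp [Matrix.one_fin_two]
  | succ n ih =>
      rw [zpow_add_one, Units.val_mul, ih, hh, Matrix.mul_fin_two]
      push_cast
      norm_num [add_comm]
  | pred n ih =>
      rw [zpow_sub_one, Units.val_mul, ih, hinv, Matrix.mul_fin_two]
      push_cast
      norm_num
      ring

/-- For all integers `s` and `t`, the commutator `g^s h^t g^{-s} h^{-t}` of
`g = !![1+√2, 0; 0, 1]` and `h = !![1, 1; 0, 1]` (as invertible real matrices) equals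
the matrix `!![1, t((1+√2)^s - 1); 0, 1]`. -/
theorem stmt5 (g h : (Matrix (Fin 2) (Fin 2) ℝ)ˣ)
    (hg : (g : Matrix (Fin 2) (Fin 2) ℝ) = !![1 + Real.sqrt 2, 0; 0, 1])
    (hh : (h : Matrix (Fin 2) (Fin 2) ℝ) = !![1, 1; 0, 1])
    (s t : ℤ) :
    ((g ^ s * h ^ t * g ^ (-s) * h ^ (-t) : (Matrix (Fin 2) (Fin 2) ℝ)ˣ) :
        Matrix (Fin 2) (Fin 2) ℝ)
      = !![1, (t : ℝ) * ((1 + Real.sqrt 2) ^ s - 1); 0, 1] := by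
  have ha : (1 + Real.sqrt 2) ≠ 0 := by positivity
  have hG := gpow_aux g ha hg
  have hH := hpow_aux h hh
  rw [Units.val_mul, Units.val_mul, Units.val_mul, hG s, hG (-s), hH t, hH (-t)]
  rw [Matrix.mul_fin_two, Matrix.mul_fin_two, Matrix.mul_fin_two]
  have key : (1 + Real.sqrt 2) ^ s * (1 + Real.sqrt 2) ^ (-s) = 1 := by
    rw [← zpow_add₀ ha]; simp
  push_cast
  congr 1 <;> ring_nf <;> rw [zpow_neg] <;> field_simp <;> ring
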